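/- Fix a real number a with 0 < a < 1/√2, set t₋ := (a^2/(1−a^2))^{1/6}, and let ξ₁ := (−1 + i√3)/2 and ξ₂ := (−1 − i√3)/2. For t ∈ (0, t₋) put h_j(t) := −i·(ξ_j·t + 1/(ξ_j·t))·C(t) for j = 1, 2. Then for every t ∈ (0, t₋) the map t ↦ z(t) is differentiable at t and its derivative z′(t) satisfies (h₁(t) − h₂(t))·z′(t) = (3√3·t/(t^4 + t^2 + 1))·( (1 − 2a^2)/(ã₊(t)·ã₋(t)) − i ); in particular the real part of (h₁(t) − h₂(t))·z′(t) is strictly positive. -/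

import Mathlib

set_option maxHeartbeats 1000000


open Complex

/-- `ã₊(t) := √((1−a²) − a²t⁶)`. -/
noncomputable def aPlus (a t : ℝ) : ℝ := Real.sqrt ((1 - a ^ 2) - a ^ 2 * t ^ 6)

/-- `ã₋(t) := √(a²t⁻⁶ − (1−a²))`. -/
noncomputable def aMinus (a t : ℝ) : ℝ := Real.sqrt (a ^ 2 / t ^ 6 - (1 - a ^ 2))

/-- `C(t) := (ã₊(t) + i t⁶ ã₋(t)) / ((1−a²)(1+t⁶))`. -/
noncomputable def Cparam (a t : ℝ) : ℂ :=
  ((aPlus a t : ℂ) + Complex.I * (t : ℂ) ^ 6 * (aMinus a t : ℂ))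
    / (((1 - a ^ 2 : ℝ) : ℂ) * (1 + (t : ℂ) ^ 6))

/-- `z(t) := (t³/(1−t⁶))(ã₋(t) + i ã₊(t))`. -/
noncomputable def zparam (a t : ℝ) : ℂ :=
  ((t : ℂ) ^ 3 / (1 - (t : ℂ) ^ 6)) * ((aMinus a t : ℂ) + Complex.I * (aPlus a t : ℂ))

/-- The derivative identity at the end of Section 6.2 of the paper: with
`ξ₁ = (−1+i√3)/2`, `ξ₂ = (−1−i√3)/2` and `h_j(t) = −i(ξ_j t + 1/(ξ_j t))C(t)`, the map
`t ↦ z(t)` is differentiable on `(0, t₋)` and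
`(h₁−h₂)z′ = (3√3 t/(t⁴+t²+1))((1−2a²)/(ã₊ã₋) − i)`; in particular
`Re((h₁−h₂)z′) > 0`. -/
theorem derivative_identity (a : ℝ) (ha0 : 0 < a) (ha1 : a < 1 / Real.sqrt 2)
    (t : ℝ) (ht0 : 0 < t) (ht1 : t < (a ^ 2 / (1 - a ^ 2)) ^ ((1 : ℝ) / 6)) :
    let ξ₁ : ℂ := (-1 + Complex.I * (Real.sqrt 3 : ℂ)) / 2
    let ξ₂ : ℂ := (-1 - Complex.I * (Real.sqrt 3 : ℂ)) / 2
    let h₁ : ℂ := -Complex.I * (ξ₁ * (t : ℂ) + 1 / (ξ₁ * (t : ℂ))) * Cparam a t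
    let h₂ : ℂ := -Complex.I * (ξ₂ * (t : ℂ) + 1 / (ξ₂ * (t : ℂ))) * Cparam a t
    DifferentiableAt ℝ (zparam a) t ∧
    (h₁ - h₂) * deriv (zparam a) t
      = ((3 * Real.sqrt 3 * t / (t ^ 4 + t ^ 2 + 1) : ℝ) : ℂ)
          * ((((1 - 2 * a ^ 2) / (aPlus a t * aMinus a t) : ℝ) : ℂ) - Complex.I) ∧
    0 < ((h₁ - h₂) * deriv (zparam a) t).re := by
  intro ξ₁ ξ₂ h₁ h₂
  have h2 : (0:ℝ) < Real.sqrt 2 := Real.sqrt_pos.mpr (by norm_num)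
  have hs2 : Real.sqrt 2 ^ 2 = 2 := Real.sq_sqrt (by norm_num)
  have h3 : a * Real.sqrt 2 < 1 := by
    have := mul_lt_mul_of_pos_right ha1 h2
    rwa [one_div, inv_mul_cancel₀ h2.ne'] at this
  have ha2 : a ^ 2 < 1 / 2 := by nlinarith
  have hA : (0:ℝ) < 1 - a ^ 2 := by nlinarith
  have hx : (0:ℝ) < a ^ 2 / (1 - a ^ 2) := by positivity
  have ht6 : t ^ 6 < a ^ 2 / (1 - a ^ 2) := by
    calc t ^ 6 < ((a ^ 2 / (1 - a ^ 2)) ^ ((1:ℝ)/6)) ^ 6 :=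
          pow_lt_pow_left₀ ht1 ht0.le (by norm_num)
      _ = a ^ 2 / (1 - a ^ 2) := by
          rw [← Real.rpow_natCast ((a ^ 2 / (1 - a ^ 2)) ^ ((1:ℝ)/6)) 6,
            ← Real.rpow_mul hx.le]
          norm_num
  have ht6' : t ^ 6 < 1 := lt_trans ht6 (by rw [div_lt_one hA]; nlinarith)
  have hX : (0:ℝ) < (1 - a ^ 2) - a ^ 2 * t ^ 6 := by nlinarith [sq_nonneg a]
  have hY : (0:ℝ) < a ^ 2 / t ^ 6 - (1 - a ^ 2) := by
    rw [sub_pos, lt_div_iff₀ (pow_pos ht0 6)]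
    rw [lt_div_iff₀ hA] at ht6; linarith [ht6]
  have hp : 0 < aPlus a t := Real.sqrt_pos.mpr hX
  have hm : 0 < aMinus a t := Real.sqrt_pos.mpr hY
  have hp2 : aPlus a t ^ 2 = (1 - a ^ 2) - a ^ 2 * t ^ 6 := Real.sq_sqrt hX.le
  have hm2 : aMinus a t ^ 2 = a ^ 2 / t ^ 6 - (1 - a ^ 2) := Real.sq_sqrt hY.le
  have h16R : (1:ℝ) - t ^ 6 ≠ 0 := by nlinarith
  -- derivative construction
  have hP' : HasDerivAt (fun s => aPlus a s)
      (-(a ^ 2 * (6 * t ^ 5)) / (2 * aPlus a t)) t := by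
    have hup : HasDerivAt (fun s : ℝ => (1 - a ^ 2) - a ^ 2 * s ^ 6)
        (-(a ^ 2 * (6 * t ^ 5))) t := by
      simpa using ((hasDerivAt_pow 6 t).const_mul (a ^ 2)).const_sub (1 - a ^ 2)
    simpa [aPlus] using hup.sqrt (ne_of_gt hX)
  have hM' : HasDerivAt (fun s => aMinus a s)
      (a ^ 2 * (-(6 * t ^ 5) / (t ^ 6) ^ 2) / (2 * aMinus a t)) t := by
    have hv : HasDerivAt (fun s : ℝ => a ^ 2 / s ^ 6 - (1 - a ^ 2))
        (a ^ 2 * (-(6 * t ^ 5) / (t ^ 6) ^ 2)) t := by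
      have h := (((hasDerivAt_pow 6 t).inv (pow_ne_zero 6 ht0.ne')).const_mul
        (a ^ 2)).sub_const (1 - a ^ 2)
      simpa [div_eq_mul_inv] using h
    simpa [aMinus] using hv.sqrt (ne_of_gt hY)
  have hr : HasDerivAt (fun s : ℝ => s ^ 3 / (1 - s ^ 6))
      ((3 * t ^ 2 * (1 - t ^ 6) - t ^ 3 * (-(6 * t ^ 5))) / (1 - t ^ 6) ^ 2) t := by
    have := (hasDerivAt_pow 3 t).div ((hasDerivAt_pow 6 t).const_sub 1) h16R
    exact this.congr_deriv (by norm_num)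
  have hfun : zparam a = fun s : ℝ =>
      ((s ^ 3 / (1 - s ^ 6) * aMinus a s : ℝ) : ℂ)
        + Complex.I * ((s ^ 3 / (1 - s ^ 6) * aPlus a s : ℝ) : ℂ) := by
    funext s; simp only [zparam]; push_cast; ring
  obtain ⟨Zr, hZr⟩ : ∃ x : ℝ, x = (3 * t ^ 2 * (1 - t ^ 6) - t ^ 3 * (-(6 * t ^ 5)))
      / (1 - t ^ 6) ^ 2 * aMinus a t + t ^ 3 / (1 - t ^ 6)
      * (a ^ 2 * (-(6 * t ^ 5) / (t ^ 6) ^ 2) / (2 * aMinus a t)) := ⟨_, rfl⟩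
  obtain ⟨Zi, hZi⟩ : ∃ x : ℝ, x = (3 * t ^ 2 * (1 - t ^ 6) - t ^ 3 * (-(6 * t ^ 5)))
      / (1 - t ^ 6) ^ 2 * aPlus a t + t ^ 3 / (1 - t ^ 6)
      * (-(a ^ 2 * (6 * t ^ 5)) / (2 * aPlus a t)) := ⟨_, rfl⟩
  have hZhas : HasDerivAt (zparam a) ((Zr : ℝ) + Complex.I * (Zi : ℝ)) t := by
    rw [hZr, hZi, hfun]
    exact ((hr.mul hM').ofReal_comp).add (((hr.mul hP').ofReal_comp).const_mul Complex.I)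
  have hZ : deriv (zparam a) t = ((Zr : ℝ) : ℂ) + Complex.I * ((Zi : ℝ) : ℂ) := hZhas.deriv
  have hs3 : (0:ℝ) < Real.sqrt 3 := Real.sqrt_pos.mpr (by norm_num)
  have hs32 : ((Real.sqrt 3 : ℝ):ℂ) ^ 2 = 3 := by
    norm_cast; exact_mod_cast Real.sq_sqrt (by norm_num : (3:ℝ) ≥ 0).le
  have hI : Complex.I ^ 2 = -1 := Complex.I_sq
  have htC : (t:ℂ) ≠ 0 := by exact_mod_cast ht0.ne'
  have hAC : ((1 - a^2 : ℝ):ℂ) ≠ 0 := by exact_mod_cast hA.ne'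
  have h16 : (1:ℝ) - t ^ 6 ≠ 0 := by nlinarith
  have h16C : (1:ℂ) - (t:ℂ) ^ 6 ≠ 0 := by exact_mod_cast h16
  have h16C' : (1:ℂ) + (t:ℂ) ^ 6 ≠ 0 := by
    have h : (0:ℝ) < 1 + t^6 := by positivity
    exact_mod_cast h.ne'
  have hpC : ((aPlus a t : ℝ):ℂ) ≠ 0 := by exact_mod_cast hp.ne'
  have hmC : ((aMinus a t : ℝ):ℂ) ≠ 0 := by exact_mod_cast hm.ne'
  have hden : (0:ℝ) < t ^ 4 + t ^ 2 + 1 := by positivity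
  have hdenC : ((t ^ 4 + t ^ 2 + 1 : ℝ):ℂ) ≠ 0 := by exact_mod_cast hden.ne'
  have hxi1 : ξ₁ ≠ 0 := by
    intro h
    have h2 : (-1 + Complex.I * (Real.sqrt 3:ℂ)) = 0 := by
      have := congrArg (· * 2) h
      simpa [ξ₁, div_mul_cancel₀] using this
    have := congrArg Complex.re h2
    simp at this
  have hxi2 : ξ₂ ≠ 0 := by
    intro h
    have h2 : (-1 - Complex.I * (Real.sqrt 3:ℂ)) = 0 := by
      have := congrArg (· * 2) h
      simpa [ξ₂, div_mul_cancel₀] using this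
    have := congrArg Complex.re h2
    simp at this
  have hp2C : ((aPlus a t : ℝ):ℂ) ^ 2 = ((1:ℂ) - (a:ℂ) ^ 2) - (a:ℂ) ^ 2 * (t:ℂ) ^ 6 := by
    exact_mod_cast congrArg (fun x : ℝ => (x:ℂ)) hp2
  have hm2C : ((aMinus a t : ℝ):ℂ) ^ 2 * (t:ℂ)^6 = (a:ℂ) ^ 2 - ((1:ℂ) - (a:ℂ) ^ 2) * (t:ℂ)^6 := by
    have : (aMinus a t)^2 * t^6 = a^2 - (1 - a^2) * t^6 := by
      rw [hm2, sub_mul, div_mul_cancel₀ _ (pow_ne_zero 6 ht0.ne')]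
    exact_mod_cast congrArg (fun x : ℝ => (x:ℂ)) this
  have hdiff : h₁ - h₂ = (Real.sqrt 3 : ℂ) * ((t:ℂ)^2 - 1) / ((t:ℂ)) * Cparam a t := by
    have hne1 : (-1 + Complex.I * (Real.sqrt 3:ℂ)) ≠ 0 := by
      intro h; have := congrArg Complex.re h; simp at this
    have hne2 : (-1 - Complex.I * (Real.sqrt 3:ℂ)) ≠ 0 := by
      intro h; have := congrArg Complex.re h; simp at this
    simp only [h₁, h₂, ξ₁, ξ₂]
    field_simp
    linear_combination (2*Cparam a t*((Real.sqrt 3:ℝ):ℂ)*(((Real.sqrt 3:ℝ):ℂ)^2*(t:ℂ)^2*Complex.I^2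
        + 4 - (t:ℂ)^2 - ((Real.sqrt 3:ℝ):ℂ)^2)) * hI
      + (2*Cparam a t*((Real.sqrt 3:ℝ):ℂ)) * hs32
  have hm2t : aMinus a t ^ 2 * t ^ 6 = a ^ 2 - (1 - a ^ 2) * t ^ 6 := by
    rw [hm2, sub_mul, div_mul_cancel₀ _ (pow_ne_zero 6 ht0.ne')]
  have hZr2 : Zr = 3 * t ^ 2 * (3 * a ^ 2 - 1 - (1 - a ^ 2) * t ^ 6)
      / ((1 - t ^ 6) ^ 2 * aMinus a t) := by
    rw [hZr]
    field_simp
    linear_combination 6*(1+t^6) * hm2t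
  have hZi2 : Zi = 3 * t ^ 2 * ((1 - a ^ 2) + (1 - 3 * a ^ 2) * t ^ 6)
      / ((1 - t ^ 6) ^ 2 * aPlus a t) := by
    rw [hZi]
    field_simp
    linear_combination 6*(1+t^6) * hp2
  have hAC2 : (1:ℂ) - (a:ℂ)^2 ≠ 0 := by
    have : ((1 - a^2 : ℝ):ℂ) ≠ 0 := by exact_mod_cast hA.ne'
    push_cast at this; exact this
  have hdenC2 : (t:ℂ)^4 + (t:ℂ)^2 + 1 ≠ 0 := by
    push_cast at hdenC; exact hdenC
  have key : (h₁ - h₂) * deriv (zparam a) t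
      = ((3 * Real.sqrt 3 * t / (t ^ 4 + t ^ 2 + 1) : ℝ) : ℂ)
        * ((((1 - 2 * a ^ 2) / (aPlus a t * aMinus a t) : ℝ) : ℂ) - Complex.I) := by
    rw [hZ, hdiff, hZr2, hZi2, Cparam]
    push_cast
    field_simp [htC, hAC2, h16C, h16C', hpC, hmC, hdenC2]
    rw [eq_div_iff (by contrapose! hdenC2; linear_combination hdenC2)]
    linear_combination (-(1-(t:ℂ)^6)*((a:ℂ)^2*3 - 1 - (t:ℂ)^6*(1-(a:ℂ)^2))) * hp2C
      + (-(1-(t:ℂ)^6)*Complex.I^2*(1-(a:ℂ)^2+(t:ℂ)^6*(1-(a:ℂ)^2*3))) * hm2C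
      + (-(1-(t:ℂ)^6)*(1-(a:ℂ)^2+(t:ℂ)^6*(1-(a:ℂ)^2*3))*((a:ℂ)^2-(1-(a:ℂ)^2)*(t:ℂ)^6)) * hI
  refine ⟨hZhas.differentiableAt, key, ?_⟩
  rw [key]
  have hx1 : (0:ℝ) < 3 * Real.sqrt 3 * t / (t ^ 4 + t ^ 2 + 1) := by positivity
  have hx2 : (0:ℝ) < (1 - 2 * a ^ 2) / (aPlus a t * aMinus a t) :=
    div_pos (by nlinarith) (mul_pos hp hm)
  simp only [Complex.mul_re, Complex.ofReal_re, Complex.ofReal_im, Complex.sub_re,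
    Complex.sub_im, Complex.I_re, Complex.I_im]
  nlinarith [hx1, hx2]
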